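/- Let N ≥ 1, α > 0, and let t ↦ P(t) be a family of N×N real row-stochastic matrices with P_{ij}(t) ≥ α for all i, j and all t ≥ 0, such that t ↦ P(t) is continuous. Let x : [0,∞) → ℝ^N be differentiable and satisfy ẋ(t) = −(I − P(t)) x(t) for all t ≥ 0. Then diam(x(t)) ≤ e^{−2αt} · diam(x(0)) for all t ≥ 0, where diam(x) := max_i x_i − min_i x_i. -/

import Mathlib

open Matrix BigOperators

/-- The diameter of a vector: `diam x = max_i x_i − min_i x_i`. -/
noncomputable def vecDiam {N : ℕ} (x : Fin N → ℝ) : ℝ := (⨆ i, x i) - (⨅ i, x i)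

section aux

variable {N : ℕ} [Nonempty (Fin N)]

lemma le_vecSup (x : Fin N → ℝ) (i : Fin N) : x i ≤ ⨆ j, x j :=
  le_ciSup (Set.Finite.bddAbove (Set.finite_range x)) i

lemma vecInf_le (x : Fin N → ℝ) (i : Fin N) : (⨅ j, x j) ≤ x i :=
  ciInf_le (Set.Finite.bddBelow (Set.finite_range x)) i

lemma vecDiam_nonneg (x : Fin N → ℝ) : 0 ≤ vecDiam x := by
  obtain ⟨i⟩ := ‹Nonempty (Fin N)›
  have := (vecInf_le x i).trans (le_vecSup x i)
  simpa [vecDiam] using this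

lemma vecDiam_add_le (a b : Fin N → ℝ) : vecDiam (a + b) ≤ vecDiam a + vecDiam b := by
  have h1 : (⨆ i, (a + b) i) ≤ (⨆ i, a i) + ⨆ i, b i :=
    ciSup_le fun i => add_le_add (le_vecSup a i) (le_vecSup b i)
  have h2 : (⨅ i, a i) + (⨅ i, b i) ≤ ⨅ i, (a + b) i :=
    le_ciInf fun i => add_le_add (vecInf_le a i) (vecInf_le b i)
  simp only [vecDiam]
  linarith

lemma vecDiam_smul_le (c : ℝ) (hc : 0 ≤ c) (a : Fin N → ℝ) :
    vecDiam (c • a) ≤ c * vecDiam a := by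
  have h1 : (⨆ i, (c • a) i) ≤ c * ⨆ i, a i :=
    ciSup_le fun i => mul_le_mul_of_nonneg_left (le_vecSup a i) hc
  have h2 : c * (⨅ i, a i) ≤ ⨅ i, (c • a) i :=
    le_ciInf fun i => mul_le_mul_of_nonneg_left (vecInf_le a i) hc
  simp only [vecDiam]
  nlinarith [vecDiam_nonneg a]

lemma vecDiam_le_two_norm (a : Fin N → ℝ) : vecDiam a ≤ 2 * ‖a‖ := by
  have h1 : (⨆ i, a i) ≤ ‖a‖ :=
    ciSup_le fun i => (le_abs_self _).trans ((Real.norm_eq_abs _) ▸ norm_le_pi_norm a i)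
  have h2 : -‖a‖ ≤ ⨅ i, a i :=
    le_ciInf fun i => (abs_le.mp ((Real.norm_eq_abs _) ▸ norm_le_pi_norm a i)).1
  simp only [vecDiam]
  linarith

/-- Key contraction lemma: row-stochastic matrices with entries `≥ α` contract the diameter
by a factor `1 - 2α`. -/
lemma vecDiam_mulVec_le (α : ℝ) (P : Matrix (Fin N) (Fin N) ℝ)
    (hrow : ∀ i, ∑ j, P i j = 1) (hnn : ∀ i j, 0 ≤ P i j) (hpos : ∀ i j, α ≤ P i j)
    (v : Fin N → ℝ) : vecDiam (P.mulVec v) ≤ (1 - 2 * α) * vecDiam v := by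
  set M := ⨆ i, v i with hM
  set m := ⨅ i, v i with hm
  have hd : 0 ≤ M - m := by have := vecDiam_nonneg v; simpa [vecDiam, ← hM, ← hm] using this
  obtain ⟨j0, hj0⟩ := Finite.exists_min v
  obtain ⟨i0, hi0⟩ := Finite.exists_max v
  have hvj0 : v j0 = m := le_antisymm (le_ciInf hj0) (vecInf_le v j0)
  have hvi0 : v i0 = M := le_antisymm (le_vecSup v i0) (ciSup_le hi0)
  have hub : ∀ i, (P.mulVec v) i ≤ M - α * (M - m) := by
    intro i
    have hsplit : ∑ k, P i k * v k
        = P i j0 * v j0 + ∑ k ∈ Finset.univ.erase j0, P i k * v k :=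
      (Finset.add_sum_erase Finset.univ (fun k => P i k * v k) (Finset.mem_univ j0)).symm
    have hle : ∑ k ∈ Finset.univ.erase j0, P i k * v k
        ≤ ∑ k ∈ Finset.univ.erase j0, P i k * M :=
      Finset.sum_le_sum fun k _ => mul_le_mul_of_nonneg_left (le_vecSup v k) (hnn i k)
    have hsum : ∑ k ∈ Finset.univ.erase j0, P i k = 1 - P i j0 := by
      have := Finset.add_sum_erase Finset.univ (fun k => P i k) (Finset.mem_univ j0)
      have h1 := hrow i
      linarith
    have : (P.mulVec v) i ≤ P i j0 * m + (1 - P i j0) * M := by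
      have : (P.mulVec v) i = ∑ k, P i k * v k := by
        simp [Matrix.mulVec, dotProduct]
      rw [this, hsplit, hvj0]
      calc P i j0 * m + ∑ k ∈ Finset.univ.erase j0, P i k * v k
          ≤ P i j0 * m + ∑ k ∈ Finset.univ.erase j0, P i k * M := by linarith
        _ = P i j0 * m + (1 - P i j0) * M := by rw [← Finset.sum_mul, hsum]
    have hPα : α * (M - m) ≤ P i j0 * (M - m) :=
      mul_le_mul_of_nonneg_right (hpos i j0) hd
    nlinarith
  have hlb : ∀ i, m + α * (M - m) ≤ (P.mulVec v) i := by
    intro i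
    have hsplit : ∑ k, P i k * v k
        = P i i0 * v i0 + ∑ k ∈ Finset.univ.erase i0, P i k * v k :=
      (Finset.add_sum_erase Finset.univ (fun k => P i k * v k) (Finset.mem_univ i0)).symm
    have hle : ∑ k ∈ Finset.univ.erase i0, P i k * m
        ≤ ∑ k ∈ Finset.univ.erase i0, P i k * v k :=
      Finset.sum_le_sum fun k _ => mul_le_mul_of_nonneg_left (vecInf_le v k) (hnn i k)
    have hsum : ∑ k ∈ Finset.univ.erase i0, P i k = 1 - P i i0 := by
      have := Finset.add_sum_erase Finset.univ (fun k => P i k) (Finset.mem_univ i0)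
      have h1 := hrow i
      linarith
    have : P i i0 * M + (1 - P i i0) * m ≤ (P.mulVec v) i := by
      have heq : (P.mulVec v) i = ∑ k, P i k * v k := by
        simp [Matrix.mulVec, dotProduct]
      rw [heq, hsplit, hvi0]
      calc P i i0 * M + (1 - P i i0) * m
          = P i i0 * M + ∑ k ∈ Finset.univ.erase i0, P i k * m := by rw [← Finset.sum_mul, hsum]
        _ ≤ P i i0 * M + ∑ k ∈ Finset.univ.erase i0, P i k * v k := by linarith
    have hPα : α * (M - m) ≤ P i i0 * (M - m) :=
      mul_le_mul_of_nonneg_right (hpos i i0) hd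
    nlinarith
  have h1 : (⨆ i, (P.mulVec v) i) ≤ M - α * (M - m) := ciSup_le hub
  have h2 : m + α * (M - m) ≤ ⨅ i, (P.mulVec v) i := le_ciInf hlb
  simp only [vecDiam, ← hM, ← hm]
  linarith

lemma abs_vecDiam_sub_le (a b : Fin N → ℝ) :
    |vecDiam a - vecDiam b| ≤ 2 * ‖a - b‖ := by
  have h1 : vecDiam a ≤ vecDiam b + 2 * ‖a - b‖ := by
    have := vecDiam_add_le b (a - b)
    have h2 := vecDiam_le_two_norm (a - b)
    simpa using this.trans (by linarith)
  have h2 : vecDiam b ≤ vecDiam a + 2 * ‖a - b‖ := by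
    have := vecDiam_add_le a (b - a)
    have h3 := vecDiam_le_two_norm (b - a)
    have hn : ‖b - a‖ = ‖a - b‖ := norm_sub_rev b a
    simpa using this.trans (by linarith)
  rw [abs_sub_le_iff]
  constructor <;> linarith

end aux

/-- **Instantaneous diameter contraction for the time-varying consensus flow.**
If `P(t)` is continuous in `t`, row-stochastic, and uniformly positive
(`P_{ij}(t) ≥ α`) for all `t ≥ 0`, and `x` solves `ẋ = −(I − P(t)) x` on `[0,∞)`,
then `diam(x(t)) ≤ e^{−2αt} diam(x(0))` for all `t ≥ 0`. -/
theorem timeVarying_consensus_diam_contraction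
    (N : ℕ) (hN : 1 ≤ N) (α : ℝ) (hα : 0 < α)
    (P : ℝ → Matrix (Fin N) (Fin N) ℝ)
    (hPcont : Continuous P)
    (hrow : ∀ t ≥ (0:ℝ), ∀ i, ∑ j, P t i j = 1)
    (hnonneg : ∀ t ≥ (0:ℝ), ∀ i j, 0 ≤ P t i j)
    (hpos : ∀ t ≥ (0:ℝ), ∀ i j, α ≤ P t i j)
    (x : ℝ → Fin N → ℝ)
    (hode : ∀ t ≥ (0:ℝ), HasDerivAt x ((P t).mulVec (x t) - x t) t) :
    ∀ t ≥ (0:ℝ), vecDiam (x t) ≤ Real.exp (-2 * α * t) * vecDiam (x 0) := by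
  haveI : Nonempty (Fin N) := ⟨⟨0, hN⟩⟩
  intro t ht
  set f : ℝ → ℝ := fun s => vecDiam (x s) with hf_def
  -- continuity of f on [0, t]
  have hxc : ∀ s ∈ Set.Icc (0:ℝ) t, ContinuousAt x s := fun s hs =>
    (hode s hs.1).continuousAt
  have hfc : ContinuousOn f (Set.Icc 0 t) := by
    intro s hs
    apply ContinuousAt.continuousWithinAt
    have hx := hxc s hs
    rw [Metric.continuousAt_iff] at hx ⊢
    intro ε hε
    obtain ⟨δ, hδ, hball⟩ := hx (ε / 2) (by linarith)
    refine ⟨δ, hδ, fun {z} hz => ?_⟩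
    have := hball hz
    have hle : dist (f z) (f s) ≤ 2 * dist (x z) (x s) := by
      rw [Real.dist_eq, dist_eq_norm]
      exact abs_vecDiam_sub_le (x z) (x s)
    calc dist (f z) (f s) ≤ 2 * dist (x z) (x s) := hle
      _ < 2 * (ε / 2) := by linarith [dist_nonneg (x := x z) (y := x s)]
      _ = ε := by ring
  -- Grönwall
  have key := le_gronwallBound_of_liminf_deriv_right_le (f := f)
    (f' := fun s => -(2 * α) * f s) (δ := f 0) (K := -(2 * α)) (ε := 0) (a := 0) (b := t)
    hfc ?_ le_rfl (fun s _ => by simp) t (Set.right_mem_Icc.mpr ht)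
  · rw [gronwallBound_ε0] at key
    calc vecDiam (x t) = f t := rfl
      _ ≤ f 0 * Real.exp (-(2 * α) * (t - 0)) := key
      _ = Real.exp (-2 * α * t) * vecDiam (x 0) := by rw [mul_comm]; ring_nf; rfl
  · -- the liminf slope estimate
    intro s hs r hr
    apply Filter.Eventually.frequently
    have hs0 : (0:ℝ) ≤ s := hs.1
    set d := f s with hd_def
    have hd0 : 0 ≤ d := vecDiam_nonneg (x s)
    have hrpos : 0 < r + 2 * α * d := by
      have : -(2 * α) * d < r := hr
      linarith
    set c := (r + 2 * α * d) / 4 with hc_def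
    have hc0 : 0 < c := by positivity
    set v := (P s).mulVec (x s) - x s with hv_def
    have hlo := (hasDerivAt_iff_isLittleO.mp (hode s hs0)).def hc0
    have h1 : ∀ᶠ z in nhdsWithin s (Set.Ioi s),
        ‖x z - x s - (z - s) • v‖ ≤ c * ‖z - s‖ :=
      nhdsWithin_le_nhds hlo
    have h2 : ∀ᶠ z in nhdsWithin s (Set.Ioi s), z ∈ Set.Ioo s (s + 1) :=
      Ioo_mem_nhdsGT_of_mem ⟨le_refl s, by linarith⟩
    filter_upwards [h1, h2] with z herr hz
    have hzs : 0 < z - s := by have := hz.1; simpa [sub_pos] using this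
    have hzs1 : z - s < 1 := by have := hz.2; linarith
    set h := z - s with hh_def
    set err := x z - x s - h • v with herr_def
    -- decomposition
    have hdecomp : x z = ((1 - h) • x s + h • (P s).mulVec (x s)) + err := by
      funext i
      simp only [herr_def, hv_def, Pi.add_apply, Pi.smul_apply, Pi.sub_apply, smul_eq_mul]
      ring
    have hbound1 : vecDiam (x z)
        ≤ vecDiam ((1 - h) • x s + h • (P s).mulVec (x s)) + vecDiam err := by
      rw [hdecomp]; exact vecDiam_add_le _ _
    have hbound2 : vecDiam ((1 - h) • x s + h • (P s).mulVec (x s))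
        ≤ (1 - h) * d + h * ((1 - 2 * α) * d) := by
      refine (vecDiam_add_le _ _).trans (add_le_add ?_ ?_)
      · exact vecDiam_smul_le _ (by linarith) _
      · refine (vecDiam_smul_le _ hzs.le _).trans ?_
        exact mul_le_mul_of_nonneg_left
          (vecDiam_mulVec_le α (P s) (hrow s hs0) (hnonneg s hs0) (hpos s hs0) (x s)) hzs.le
    have hbound3 : vecDiam err ≤ 2 * (c * h) := by
      refine (vecDiam_le_two_norm err).trans ?_
      have : ‖err‖ ≤ c * h := by
        have := herr
        rwa [Real.norm_eq_abs, abs_of_pos hzs] at this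
      linarith
    have hfz : f z - f s ≤ (-(2 * α) * d + 2 * c) * h := by
      have : f z ≤ (1 - h) * d + h * ((1 - 2 * α) * d) + 2 * (c * h) := by
        calc f z = vecDiam (x z) := rfl
          _ ≤ _ := hbound1.trans (by linarith)
      have hfs : f s = d := rfl
      nlinarith
    have hfinal : (z - s)⁻¹ * (f z - f s) ≤ -(2 * α) * d + 2 * c := by
      rw [← hh_def]
      rw [inv_mul_le_iff₀ hzs]
      calc f z - f s ≤ (-(2 * α) * d + 2 * c) * h := hfz
        _ = h * (-(2 * α) * d + 2 * c) := mul_comm _ _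
    have : -(2 * α) * d + 2 * c < r := by
      simp only [hc_def]
      linarith
    linarith
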